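/- arXiv:2510.26107 — 3 statements merged into one kernel-verified Lean document; each statement's English description precedes it below -/
import Mathlib

section
/- There is a unique ℤ-linear endomorphism σ of L with σ(h) = f and σ(e_i) = d_i for all 1 ≤ i ≤ 10, and this σ is an involution (σ ∘ σ = id), preserves the bilinear form (⟨σx, σy⟩ = ⟨x, y⟩ for all x, y ∈ L), and fixes K (σ(K) = K). In other words, d_i and f are the images of e_i and h under a reflection of the lattice that preserves the intersection product and fixes the canonical class. -/
/-- The lattice `L = ℤ^{11}` with basis `h, e₁, …, e₁₀`. -/
abbrev L : Type := Fin 11 → ℤ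

/-- The hyperplane class `h`. -/
def h : L := fun j => if j = 0 then 1 else 0

/-- The exceptional classes `e i` for `i = 1, …, 10`. -/
def e (i : Fin 10) : L := fun j => if j = i.succ then 1 else 0

/-- The intersection form: `⟨h,h⟩ = 1`, `⟨eᵢ,eᵢ⟩ = -1`, off-diagonal zero. -/
def form (x y : L) : ℤ := x 0 * y 0 - ∑ i : Fin 10, x i.succ * y i.succ

/-- The canonical class `K = -3h + ∑ eᵢ`. -/
def K : L := (-3 : ℤ) • h + ∑ i : Fin 10, e i

/-- `f = -19h + 6∑ eᵢ`. -/
def f : L := (-19 : ℤ) • h + (6 : ℤ) • ∑ i : Fin 10, e i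

/-- `d i = -6h + 2∑ eⱼ - eᵢ`. -/
def d (i : Fin 10) : L := (-6 : ℤ) • h + (2 : ℤ) • ∑ j : Fin 10, e j - e i

noncomputable section
open Matrix

/-- The matrix of the reflection: column 0 is `f`, column `i.succ` is `d i`. -/
def Mσ : Matrix (Fin 11) (Fin 11) ℤ :=
  fun i j => if i = 0 then (if j = 0 then -19 else -6)
    else (if j = 0 then 6 else (if i = j then 1 else 2))

/-- The Gram matrix of the form. -/
def Qm : Matrix (Fin 11) (Fin 11) ℤ :=
  fun i j => if i = j then (if i = 0 then 1 else -1) else 0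

lemma single_zero : (Pi.single (0 : Fin 11) (1 : ℤ)) = h := by
  funext j; simp [Pi.single_apply, h, eq_comm]

lemma single_succ (i : Fin 10) : (Pi.single (i.succ : Fin 11) (1 : ℤ)) = e i := by
  funext j; simp [Pi.single_apply, e, eq_comm]

lemma Mσ_h : Mσ.mulVecLin h = f := by decide
lemma Mσ_e : ∀ i : Fin 10, Mσ.mulVecLin (e i) = d i := by decide
lemma Mσ_sq : Mσ * Mσ = 1 := by decide
lemma Mσ_Q : Mσ.transpose * (Qm * Mσ) = Qm := by decide
lemma Mσ_K : Mσ.mulVecLin K = K := by decide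

lemma form_eq (x y : L) : form x y = x ⬝ᵥ (Qm *ᵥ y) := by
  simp only [dotProduct, Matrix.mulVec, Qm, ite_mul, zero_mul,
    Finset.sum_ite_eq, Finset.mem_univ, if_true, form]
  rw [Fin.sum_univ_succ (n := 10)]
  simp [Fin.succ_ne_zero, sub_eq_add_neg, mul_comm, mul_ite, mul_one]

lemma unique_aux (σ : L →ₗ[ℤ] L) (h1 : σ h = f) (h2 : ∀ i : Fin 10, σ (e i) = d i) :
    σ = Mσ.mulVecLin := by
  apply Module.Basis.ext (Pi.basisFun ℤ (Fin 11))
  intro j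
  rw [Pi.basisFun_apply]
  refine Fin.cases ?_ ?_ j
  · rw [single_zero, h1, Mσ_h]
  · intro i; rw [single_succ, h2, Mσ_e]

end

theorem stmt_0 :
    (∃! σ : L →ₗ[ℤ] L, σ h = f ∧ ∀ i : Fin 10, σ (e i) = d i) ∧
    (∀ σ : L →ₗ[ℤ] L, (σ h = f ∧ ∀ i : Fin 10, σ (e i) = d i) →
      (σ ∘ₗ σ = LinearMap.id ∧ (∀ x y : L, form (σ x) (σ y) = form x y) ∧ σ K = K)) := by
  have key : ∀ σ : L →ₗ[ℤ] L, (σ h = f ∧ ∀ i : Fin 10, σ (e i) = d i) → σ = Mσ.mulVecLin :=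
    fun σ ⟨h1, h2⟩ => unique_aux σ h1 h2
  constructor
  · exact ⟨Mσ.mulVecLin, ⟨Mσ_h, Mσ_e⟩, fun σ hσ => key σ hσ⟩
  · intro σ hσ
    rw [key σ hσ]
    refine ⟨?_, ?_, Mσ_K⟩
    · rw [← Matrix.mulVecLin_mul, Mσ_sq, Matrix.mulVecLin_one]
    · intro x y
      simp only [Matrix.mulVecLin_apply, form_eq]
      rw [Matrix.mulVec_mulVec, Matrix.dotProduct_mulVec, ← Matrix.vecMul_transpose,
        Matrix.vecMul_vecMul, Mσ_Q, ← Matrix.dotProduct_mulVec]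
end

section
/- An element x ∈ L satisfies ⟨x, d_i⟩ = 0 for all 1 ≤ i ≤ 10 if and only if x is an integer multiple of f. (This is the lattice-theoretic content of the claim that a curve class orthogonal to all D_i must be linearly equivalent to a multiple of F.) -/
lemma esum0 : ∑ i : Fin 10, e i 0 = 0 := by
  simp [e, eq_comm, Fin.succ_ne_zero]

lemma esumsucc (j : Fin 10) : ∑ i : Fin 10, e i j.succ = 1 := by
  simp [e, Fin.succ_inj]

lemma f0 : f 0 = -19 := by simp [f, h, esum0]
lemma fsucc (j : Fin 10) : f j.succ = 6 := by
  simp [f, h, esumsucc, Fin.succ_ne_zero]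

lemma d0 (i : Fin 10) : d i 0 = -6 := by
  simp [d, h, esum0, e, eq_comm, Fin.succ_ne_zero]

lemma dsucc (i j : Fin 10) : d i j.succ = 2 - (if j = i then 1 else 0) := by
  simp [d, h, esumsucc, e, Fin.succ_inj, Fin.succ_ne_zero, eq_comm]

lemma form_d (x : L) (i : Fin 10) :
    form x (d i) = -6 * x 0 - 2 * (∑ j : Fin 10, x j.succ) + x i.succ := by
  simp only [form, d0, dsucc]
  rw [show (∑ j : Fin 10, x j.succ * (2 - if j = i then 1 else 0))
      = (∑ j : Fin 10, (2 * x j.succ - if j = i then x j.succ else 0)) from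
    Finset.sum_congr rfl (fun j _ => by split <;> ring)]
  rw [Finset.sum_sub_distrib, Finset.sum_ite_eq' _ i (fun j => x j.succ),
    ← Finset.mul_sum]
  simp
  ring

theorem stmt_1 (x : L) :
    (∀ i : Fin 10, form x (d i) = 0) ↔ ∃ n : ℤ, x = n • f := by
  constructor
  · intro hx
    have hc : ∀ i : Fin 10, x i.succ = 6 * x 0 + 2 * (∑ j : Fin 10, x j.succ) := by
      intro i
      have := hx i
      rw [form_d] at this
      linarith
    have hS : (∑ j : Fin 10, x j.succ)
        = 10 * (6 * x 0 + 2 * (∑ j : Fin 10, x j.succ)) := by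
      conv_lhs => rw [Finset.sum_congr rfl (fun j _ => hc j)]
      rw [Finset.sum_const]
      simp
    refine ⟨-(x 0 + 3 * (6 * x 0 + 2 * (∑ j : Fin 10, x j.succ))), ?_⟩
    funext j
    rw [Pi.smul_apply, smul_eq_mul]
    cases j using Fin.cases with
    | zero => rw [f0]; omega
    | succ k => rw [fsucc, hc k]; omega
  · rintro ⟨n, rfl⟩ i
    rw [form_d]
    have h1 : ∀ j : Fin 10, (n • f) j.succ = n * 6 := fun j => by
      rw [Pi.smul_apply, smul_eq_mul, fsucc]
    rw [Finset.sum_congr rfl (fun j _ => h1 j), h1 i, Finset.sum_const,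
      Pi.smul_apply, smul_eq_mul, f0]
    simp; ring
end

section
/- If σ is the ℤ-linear endomorphism of L with σ(h) = f and σ(e_i) = d_i for all 1 ≤ i ≤ 10, then χ(σ(D)) = χ(D) for every D ∈ L; that is, the reflection sending F ↦ H and D_i ↦ E_i preserves Euler characteristics. -/
/-- The Riemann–Roch Euler characteristic, defined by `2χ(D) = 2 + ⟨D, D - K⟩`
(the integer `⟨D, D - K⟩` is always even, so integer division is exact). -/
def chi (D : L) : ℤ := (2 + form D (D - K)) / 2

lemma decomp (D : L) : D = D 0 • h + ∑ i : Fin 10, D i.succ • e i := by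
  funext j
  simp only [Pi.add_apply, Pi.smul_apply, Finset.sum_apply, h, e, smul_eq_mul]
  induction j using Fin.cases with
  | zero => simp [(Fin.succ_ne_zero _).symm]
  | succ k =>
      simp [Fin.succ_ne_zero, Fin.succ_inj, eq_comm (a := k), mul_ite,
        Finset.sum_ite_eq]

theorem stmt_3 (σ : L →ₗ[ℤ] L) (hh : σ h = f) (he : ∀ i : Fin 10, σ (e i) = d i) :
    ∀ D : L, chi (σ D) = chi D := by
  intro D
  have hσ : σ D = D 0 • f + ∑ i : Fin 10, D i.succ • d i := by
    conv_lhs => rw [decomp D]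
    simp only [map_add, map_smul, map_sum, hh, he]
  unfold chi
  congr 1
  congr 1
  rw [hσ]
  simp only [form, K, f, d, h, e, Pi.add_apply, Pi.sub_apply, Pi.smul_apply,
    Finset.sum_apply, smul_eq_mul, Fin.sum_univ_succ, Finset.sum_empty,
    Fin.succ, Fin.isValue]
  norm_num [Fin.ext_iff]
  ring
end
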